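/- For n ≥ 2, every element of the multiplicative semigroup A^+(B_n) is decomposable; that is, for every f ∈ A^+(B_n) there exist g, h ∈ A^+(B_n) with g ≠ f, h ≠ f, and f = g∘h. -/

import Mathlib

def Bn (n : ℕ) : Type := Option (Fin n × Fin n)

def Bn.mul {n : ℕ} : Bn n → Bn n → Bn n
  | some (i, j), some (k, l) => if j = k then some (i, l) else none
  | _, _ => none

instance (n : ℕ) : Mul (Bn n) := ⟨Bn.mul⟩

instance (n : ℕ) : Semigroup (Bn n) where
  mul_assoc a b c := by
    show Bn.mul (Bn.mul a b) c = Bn.mul a (Bn.mul b c)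
    rcases a with _ | ⟨i, j⟩ <;> rcases b with _ | ⟨k, l⟩ <;> rcases c with _ | ⟨p, q⟩ <;>
      try rfl
    · unfold Bn.mul
      by_cases h1 : j = k <;> simp only [h1, ↓reduceIte] <;> rfl
    · unfold Bn.mul
      by_cases h1 : j = k <;> by_cases h2 : l = p <;> simp only [h1, h2, ↓reduceIte] <;> rfl

/-- Maps on `Bn n`, composed left-to-right: `x (f * g) = (x f) g`. -/
def MapBn (n : ℕ) : Type := Bn n → Bn n

instance (n : ℕ) : Monoid (MapBn n) where
  mul f g := fun x => g (f x)
  one := fun x => x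
  mul_assoc _ _ _ := rfl
  one_mul _ := rfl
  mul_one _ := rfl

/-- The constant map `ξ_c`. -/
def constMap (n : ℕ) (c : Bn n) : MapBn n := fun _ => c

/-- The `n`-support map `(p, q; σ)`, sending `(i, p) ↦ (iσ, q)` and all else to `θ`. -/
def nSuppMap (n : ℕ) (p q : Fin n) (σ : Equiv.Perm (Fin n)) : MapBn n :=
  fun x =>
    match x with
    | some (i, j) => if j = p then some (σ i, q) else none
    | none => none

instance (n : ℕ) : DecidableEq (Bn n) :=
  inferInstanceAs (DecidableEq (Option (Fin n × Fin n)))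

/-- The singleton-support map `((k,l) → (p,q))`. -/
def sglMap (n : ℕ) (k l p q : Fin n) : MapBn n :=
  fun x => @ite _ (x = some (k, l)) (instDecidableEqBn n x _) (some (p, q)) none

/-- The multiplicative semigroup reduct `A⁺(Bₙ)`, as a set of maps on `Bn n`. -/
def APlus (n : ℕ) : Set (MapBn n) :=
  {f | (∃ c, f = constMap n c) ∨ (∃ p q σ, f = nSuppMap n p q σ) ∨
       (∃ k l p q, f = sglMap n k l p q)}

/-- Independence of a subset of a semigroup. -/
def IndependentIn {S : Type*} [Semigroup S] (U : Set S) : Prop :=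
  ∀ a ∈ U, a ∉ Subsemigroup.closure (U \ {a})

theorem all_elements_decomposable (n : ℕ) (hn : 2 ≤ n) :
    ∀ f ∈ APlus n, ∃ g ∈ APlus n, ∃ h ∈ APlus n, g ≠ f ∧ h ≠ f ∧ f = g * h := by
  intro f hf
  have hmul : ∀ g h : MapBn n, g * h = fun x => h (g x) := fun _ _ => rfl
  set z : Fin n := ⟨0, by omega⟩ with hzdef
  set o : Fin n := ⟨1, by omega⟩ with hodef
  have hzo : z ≠ o := by simp [hzdef, hodef, Fin.ext_iff]
  have other : ∀ x : Fin n, ∃ y : Fin n, y ≠ x := by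
    intro x
    by_cases h : x = z
    · exact ⟨o, by rw [h]; exact hzo.symm⟩
    · exact ⟨z, fun he => h he.symm⟩
  rcases hf with ⟨c, rfl⟩ | ⟨p, q, σ, rfl⟩ | ⟨k, l, p, q, rfl⟩
  · -- constant map
    rcases c with _ | ⟨p, q⟩
    · -- c = θ
      refine ⟨constMap n (some (z, z)), Or.inl ⟨_, rfl⟩,
        sglMap n o o z z, Or.inr (Or.inr ⟨o, o, z, z, rfl⟩), ?_, ?_, ?_⟩
      · intro he
        have := congrFun he none
        simp [Bn, constMap] at this
      · intro he
        have := congrFun he (some (o, o))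
        simp [Bn, constMap, sglMap] at this
      · funext x
        rw [hmul]
        simp [Bn, constMap, sglMap, hzo]
    · -- c = some (p, q)
      obtain ⟨k, hk⟩ := other p
      refine ⟨constMap n (some (k, q)), Or.inl ⟨_, rfl⟩,
        sglMap n k q p q, Or.inr (Or.inr ⟨k, q, p, q, rfl⟩), ?_, ?_, ?_⟩
      · intro he
        have := congrFun he none
        simp [Bn, constMap] at this
        exact hk this
      · intro he
        have := congrFun he none
        simp [Bn, constMap, sglMap] at this
      · funext x
        rw [hmul]
        simp [Bn, constMap, sglMap]
  · -- n-support map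
    by_cases hσ : σ = 1
    · subst hσ
      refine ⟨nSuppMap n p q (Equiv.swap z o), Or.inr (Or.inl ⟨p, q, _, rfl⟩),
        nSuppMap n q q (Equiv.swap z o), Or.inr (Or.inl ⟨q, q, _, rfl⟩), ?_, ?_, ?_⟩
      · intro he
        have := congrFun he (some (z, p))
        simp [Bn, nSuppMap, Equiv.swap_apply_left] at this
        exact hzo this.symm
      · intro he
        have := congrFun he (some (z, q))
        by_cases hqp : q = p
        · simp [Bn, nSuppMap, hqp, Equiv.swap_apply_left] at this
          exact hzo this.symm
        · simp [Bn, nSuppMap, hqp] at this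
      · funext x
        rw [hmul]
        rcases x with _ | ⟨i, j⟩
        · simp [Bn, nSuppMap]
        · by_cases hj : j = p <;> simp [Bn, nSuppMap, hj]
    · obtain ⟨r, hr⟩ := other q
      obtain ⟨i, hi⟩ : ∃ i, σ i ≠ i := by
        by_contra h'
        push_neg at h'
        exact hσ (Equiv.ext h')
      refine ⟨nSuppMap n p r σ, Or.inr (Or.inl ⟨p, r, σ, rfl⟩),
        nSuppMap n r q 1, Or.inr (Or.inl ⟨r, q, 1, rfl⟩), ?_, ?_, ?_⟩
      · intro he
        have := congrFun he (some (z, p))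
        simp [Bn, nSuppMap] at this
        exact hr this
      · intro he
        have := congrFun he (some (i, r))
        by_cases hrp : r = p
        · simp [Bn, nSuppMap, hrp] at this
          exact hi this.symm
        · simp [Bn, nSuppMap, hrp] at this
      · funext x
        rw [hmul]
        rcases x with _ | ⟨a, j⟩
        · simp [Bn, nSuppMap]
        · by_cases hj : j = p <;> simp [Bn, nSuppMap, hj]
  · -- singleton-support map
    obtain ⟨a, ha⟩ := other k
    obtain ⟨b, hb⟩ := other q
    refine ⟨sglMap n k l a b, Or.inr (Or.inr ⟨k, l, a, b, rfl⟩),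
      sglMap n a b p q, Or.inr (Or.inr ⟨a, b, p, q, rfl⟩), ?_, ?_, ?_⟩
    · intro he
      have := congrFun he (some (k, l))
      simp [Bn, sglMap] at this
      exact hb this.2
    · intro he
      have := congrFun he (some (a, b))
      simp [Bn, sglMap, ha] at this
    · funext x
      rw [hmul]
      by_cases hx : x = some (k, l) <;> simp [Bn, sglMap, hx] <;> split_ifs <;> simp_all
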